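/- For 0 ≤ i ≤ N, the vectors {y^{↓↓} : dim y ≥ i} form a basis for the sum of the eigenspaces of A corresponding to the eigenvalues θ_0, θ_1, …, θ_{N-i}, where θ_j = (q^{N-j} - q^j)/(q-1). -/

import Mathlib

open Module

section Counting
variable {F : Type*} [Field F] [Fintype F]
variable {W : Type*} [AddCommGroup W] [Module F W] [FiniteDimensional F W]

lemma card_submodule (z : Submodule F W) :
    Nat.card z = Fintype.card F ^ finrank F z := by
  haveI : Finite W := Module.finite_of_finite F
  haveI : Fintype W := Fintype.ofFinite W
  haveI : Fintype z := Fintype.ofFinite z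
  rw [Nat.card_eq_fintype_card]
  exact card_eq_pow_finrank

lemma card_diff {x y : Submodule F W} (hxy : x ≤ y) :
    Nat.card {v : W // v ∈ y ∧ v ∉ x} + Fintype.card F ^ finrank F x
      = Fintype.card F ^ finrank F y := by
  haveI : Finite W := Module.finite_of_finite F
  classical
  have e1 : y ≃ {u : y // (u : W) ∈ x} ⊕ {u : y // ¬ (u : W) ∈ x} :=
    (Equiv.sumCompl _).symm
  have e2 : {u : y // (u : W) ∈ x} ≃ x :=
    { toFun := fun u => ⟨u.1.1, u.2⟩
      invFun := fun v => ⟨⟨v.1, hxy v.2⟩, v.2⟩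
      left_inv := fun u => rfl
      right_inv := fun v => rfl }
  have e3 : {u : y // ¬ (u : W) ∈ x} ≃ {v : W // v ∈ y ∧ v ∉ x} :=
    { toFun := fun u => ⟨u.1.1, u.1.2, u.2⟩
      invFun := fun v => ⟨⟨v.1, v.2.1⟩, v.2.2⟩
      left_inv := fun u => rfl
      right_inv := fun v => rfl }
  have := Nat.card_congr e1
  rw [Nat.card_sum, Nat.card_congr e2, Nat.card_congr e3] at this
  rw [← card_submodule x, ← card_submodule y, this]
  ring

lemma finrank_sup_span_singleton {x : Submodule F W} {v : W} (hv : v ∉ x) :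
    finrank F ↥(x ⊔ Submodule.span F {v}) = finrank F x + 1 := by
  have hv0 : v ≠ 0 := fun h => hv (h ▸ x.zero_mem)
  have hinf : x ⊓ Submodule.span F {v} = ⊥ := by
    rw [Submodule.eq_bot_iff]
    rintro u ⟨hux, hus⟩
    rcases Submodule.mem_span_singleton.mp hus with ⟨c, rfl⟩
    rcases eq_or_ne c 0 with rfl | hc
    · simp
    · exact absurd (by simpa [smul_smul, inv_mul_cancel₀ hc] using x.smul_mem c⁻¹ hux) hv
  have h := Submodule.finrank_sup_add_finrank_inf_eq x (Submodule.span F {v})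
  rw [hinf, finrank_span_singleton hv0] at h
  simpa using h

lemma cover_count {q : ℕ} (hq : Fintype.card F = q) (x y : Submodule F W) (hxy : x ≤ y) :
    Nat.card {z : Submodule F W // x ≤ z ∧ z ≤ y ∧ finrank F z = finrank F x + 1}
      * (q ^ finrank F x * (q - 1)) + q ^ finrank F x = q ^ finrank F y := by
  haveI : Finite W := Module.finite_of_finite F
  haveI : Fintype W := Fintype.ofFinite W
  haveI : Finite (Submodule F W) :=
    Finite.of_injective (fun z => (z : Set W)) SetLike.coe_injective
  have hq2 : 2 ≤ q := hq ▸ Fintype.one_lt_card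
  set T := {z : Submodule F W // x ≤ z ∧ z ≤ y ∧ finrank F z = finrank F x + 1} with hT
  set S := {v : W // v ∈ y ∧ v ∉ x} with hS
  have hf : ∀ v : S, finrank F ↥(x ⊔ Submodule.span F {(v : W)}) = finrank F x + 1 :=
    fun v => finrank_sup_span_singleton v.2.2
  let f : S → T := fun v => ⟨x ⊔ Submodule.span F {(v : W)},
    le_sup_left, sup_le hxy (by simpa [Submodule.span_le] using v.2.1), hf v⟩
  have fiber_equiv : ∀ z : T, {v : S // f v = z} ≃ {v : W // v ∈ (z : Submodule F W) ∧ v ∉ x} := by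
    intro z
    refine
      { toFun := fun v => ⟨v.1.1, ?_, v.1.2.2⟩
        invFun := fun v => ⟨⟨v.1, z.2.2.1 v.2.1, v.2.2⟩, ?_⟩
        left_inv := fun v => by ext; rfl
        right_inv := fun v => rfl }
    · have : (v.1 : W) ∈ (f v.1 : Submodule F W) :=
        Submodule.mem_sup_right (Submodule.mem_span_singleton_self _)
      rw [v.2] at this; exact this
    · apply Subtype.ext
      apply Submodule.eq_of_le_of_finrank_le
      · exact sup_le z.2.1 (by simpa [Submodule.span_le] using v.2.1)
      · rw [hf ⟨v.1, z.2.2.1 v.2.1, v.2.2⟩, z.2.2.2]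
  have fiber_card : ∀ z : T, Nat.card {v : S // f v = z} = q ^ finrank F x * (q - 1) := by
    intro z
    rw [Nat.card_congr (fiber_equiv z)]
    have := card_diff (x := x) (y := (z : Submodule F W)) z.2.1
    rw [hq, z.2.2.2] at this
    have : Nat.card {v : W // v ∈ (z : Submodule F W) ∧ v ∉ x} = q ^ finrank F x * (q - 1) := by
      have hpow : q ^ (finrank F x + 1) = q ^ finrank F x * (q - 1) + q ^ finrank F x := by
        have : q - 1 + 1 = q := by omega
        calc q ^ (finrank F x + 1) = q ^ finrank F x * (q - 1 + 1) := by rw [this, pow_succ]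
        _ = q ^ finrank F x * (q - 1) + q ^ finrank F x := by ring
      omega
    exact this
  haveI : Finite T := Subtype.finite
  haveI : Fintype T := Fintype.ofFinite T
  have key : Nat.card S = Nat.card T * (q ^ finrank F x * (q - 1)) := by
    rw [← Nat.card_congr (Equiv.sigmaFiberEquiv f)]
    haveI : Finite S := Subtype.finite
    haveI : Fintype S := Fintype.ofFinite S
    haveI : ∀ z : T, Fintype {v : S // f v = z} := fun z => Fintype.ofFinite _
    rw [Nat.card_eq_fintype_card, Fintype.card_sigma, Nat.card_eq_fintype_card,
      Finset.sum_congr rfl (fun z _ => by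
        rw [← Nat.card_eq_fintype_card, fiber_card z]),
      Finset.sum_const, Finset.card_univ, smul_eq_mul]
  have := card_diff hxy
  rw [hq] at this
  rw [← key, this]

lemma line_count {q : ℕ} (hq : Fintype.card F = q) :
    Nat.card {z : Submodule F W // finrank F z = 1} * (q - 1) + 1 = q ^ finrank F W := by
  have h := cover_count (W := W) hq ⊥ ⊤ bot_le
  rw [finrank_bot, pow_zero, one_mul, finrank_top] at h
  rw [← h]
  congr 2
  exact Nat.card_congr (Equiv.subtypeEquivRight (fun z => by simp))

lemma hyperplane_count {q : ℕ} (hq : Fintype.card F = q) :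
    Nat.card {z : Submodule F W // finrank F z + 1 = finrank F W} * (q - 1) + 1
      = q ^ finrank F W := by
  have key : ∀ z : Submodule F W,
      finrank F z.dualAnnihilator + finrank F z = finrank F W := by
    intro z
    have := Subspace.finrank_add_finrank_dualCoannihilator_eq (z.dualAnnihilator)
    rwa [Subspace.dualAnnihilator_dualCoannihilator_eq] at this
  have key2 : ∀ Φ : Subspace F (Dual F W),
      finrank F Φ + finrank F Φ.dualCoannihilator = finrank F W :=
    Subspace.finrank_add_finrank_dualCoannihilator_eq
  have e : {z : Submodule F W // finrank F z + 1 = finrank F W}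
      ≃ {Φ : Subspace F (Dual F W) // finrank F Φ = 1} :=
    { toFun := fun z => ⟨z.1.dualAnnihilator, by have := key z.1; omega⟩
      invFun := fun Φ => ⟨Φ.1.dualCoannihilator, by
        have h1 := key2 Φ.1
        rw [Φ.2] at h1; omega⟩
      left_inv := fun z => Subtype.ext Subspace.dualAnnihilator_dualCoannihilator_eq
      right_inv := fun Φ => Subtype.ext Subspace.dualCoannihilator_dualAnnihilator_eq }
  rw [Nat.card_congr e]
  have := line_count (W := Dual F W) hq
  rwa [Subspace.dual_finrank_eq] at this

lemma hyperplane_count_le {q : ℕ} (hq : Fintype.card F = q) (x : Submodule F W) :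
    Nat.card {z : Submodule F W // z ≤ x ∧ finrank F z + 1 = finrank F x} * (q - 1) + 1
      = q ^ finrank F x := by
  rw [← hyperplane_count (W := ↥x) hq]
  congr 2
  refine Nat.card_congr
    { toFun := fun z => ⟨Submodule.comap x.subtype z.1, ?_⟩
      invFun := fun z' => ⟨Submodule.map x.subtype z'.1,
        ⟨Submodule.map_subtype_le x z'.1, by rw [Submodule.finrank_map_subtype_eq]; exact z'.2⟩⟩
      left_inv := fun z => Subtype.ext (by
        dsimp only
        rw [Submodule.map_comap_subtype, inf_eq_right.2 z.2.1])
      right_inv := fun z' => Subtype.ext (by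
        dsimp only
        rw [Submodule.comap_map_eq, Submodule.ker_subtype, sup_bot_eq]) }
  have hm : Submodule.map x.subtype (Submodule.comap x.subtype z.1) = z.1 := by
    rw [Submodule.map_comap_subtype, inf_eq_right.2 z.2.1]
  have : finrank F ↥(Submodule.comap x.subtype z.1) = finrank F z.1 := by
    conv_rhs => rw [← hm]
    rw [Submodule.finrank_map_subtype_eq]
  rw [this]
  exact z.2.2

end Counting
open scoped Classical
open Module

section Main
variable {F : Type*} [Field F] [Fintype F]
variable {V : Type*} [AddCommGroup V] [Module F V] [FiniteDimensional F V]
variable [Fintype (Submodule F V)]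

noncomputable def DD (y : Submodule F V) : Submodule F V → ℝ :=
  fun z => if z ≤ y then 1 else 0

lemma DD_linearIndependent : LinearIndependent ℝ (DD (F := F) (V := V)) := by
  rw [Fintype.linearIndependent_iff]
  intro g hg
  have key : ∀ y : Submodule F V,
      g y + ∑ y' ∈ Finset.univ.filter (fun y' => y < y'), g y' = 0 := by
    intro y
    have h0 := congrFun hg y
    simp only [Finset.sum_apply, Pi.smul_apply, DD, smul_eq_mul, Pi.zero_apply,
      mul_ite, mul_one, mul_zero] at h0
    rw [← Finset.sum_filter] at h0
    have hsplit : Finset.univ.filter (fun y' => y ≤ y')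
        = insert y (Finset.univ.filter (fun y' : Submodule F V => y < y')) := by
      ext y'
      simp only [Finset.mem_filter, Finset.mem_univ, true_and, Finset.mem_insert]
      constructor
      · intro h
        rcases eq_or_lt_of_le h with h | h
        · exact Or.inl h.symm
        · exact Or.inr h
      · rintro (rfl | h)
        · exact le_rfl
        · exact h.le
    rw [hsplit, Finset.sum_insert (by simp)] at h0
    exact h0
  suffices H : ∀ (c : ℕ) (y : Submodule F V), finrank F V - finrank F y ≤ c → g y = 0 by
    intro y; exact H _ y le_rfl
  intro c
  induction c with
  | zero =>
    intro y hy
    have h0 := key y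
    rw [Finset.sum_eq_zero (fun y' hy' => ?_), add_zero] at h0
    · exact h0
    · exfalso
      rw [Finset.mem_filter] at hy'
      have h1 := Submodule.finrank_lt_finrank_of_lt hy'.2
      have h2 := Submodule.finrank_le y'
      omega
  | succ c ih =>
    intro y hy
    have h0 := key y
    rw [Finset.sum_eq_zero (fun y' hy' => ?_), add_zero] at h0
    · exact h0
    · rw [Finset.mem_filter] at hy'
      have h1 := Submodule.finrank_lt_finrank_of_lt hy'.2
      have h2 := Submodule.finrank_le y'
      exact ih y' (by omega)


lemma filter_card_eq_natCard {α : Type*} [Fintype α] (p : α → Prop) [DecidablePred p] :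
    (Finset.univ.filter p).card = Nat.card {z : α // p z} := by
  rw [Nat.card_eq_fintype_card]
  exact (Fintype.card_subtype p).symm

lemma A_DD {q : ℕ} (hq : Fintype.card F = q)
    (A : Matrix (Submodule F V) (Submodule F V) ℝ)
    (hA : ∀ y z : Submodule F V, A y z =
      if z ≤ y ∧ finrank F y = finrank F z + 1 then 1
      else if y ≤ z ∧ finrank F z = finrank F y + 1 then (q : ℝ) ^ finrank F y
      else 0)
    (y : Submodule F V) :
    A.mulVecLin (DD y) =
      (((q : ℝ) ^ finrank F y - (q : ℝ) ^ (finrank F V - finrank F y)) / ((q : ℝ) - 1)) • DD y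
      + ∑ w ∈ Finset.univ.filter
          (fun w : Submodule F V => y ≤ w ∧ finrank F w = finrank F y + 1), DD w := by
  have hq2 : 2 ≤ q := hq ▸ Fintype.one_lt_card
  have hq1ne : (q : ℝ) - 1 ≠ 0 := by
    have : (1:ℝ) < (q:ℝ) := by exact_mod_cast hq2
    linarith
  funext x
  set k := finrank F x with hk
  set m := finrank F y with hm
  set n := finrank F V with hn
  have hkn : k ≤ n := Submodule.finrank_le x
  have hmn : m ≤ n := Submodule.finrank_le y
  -- LHS
  have hsplit : ∀ z : Submodule F V, A x z * DD y z =
      (if (z ≤ x ∧ finrank F z + 1 = k) ∧ z ≤ y then (1:ℝ) else 0)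
      + (if (x ≤ z ∧ z ≤ y) ∧ finrank F z = k + 1 then (q : ℝ) ^ k else 0) := by
    intro z
    rw [hA]
    have hDD : DD y z = if z ≤ y then (1:ℝ) else 0 := rfl
    rcases Classical.em (z ≤ y) with h3 | h3
    · rw [hDD, if_pos h3, mul_one]
      rcases Classical.em (z ≤ x ∧ finrank F x = finrank F z + 1) with h1 | h1
      · rw [if_pos h1, if_pos ⟨⟨h1.1, by omega⟩, h3⟩,
          if_neg (by rintro ⟨-, h⟩; omega), add_zero]
      · rw [if_neg h1]
        rcases Classical.em (x ≤ z ∧ finrank F z = finrank F x + 1) with h2 | h2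
        · rw [if_pos h2, if_neg (by rintro ⟨⟨-, hzz⟩, -⟩; omega),
            if_pos ⟨⟨h2.1, h3⟩, by omega⟩, zero_add]
        · rw [if_neg h2, if_neg (by rintro ⟨⟨hzx, hzz⟩, -⟩; exact h1 ⟨hzx, by omega⟩),
            if_neg (by rintro ⟨⟨hxz, -⟩, hzz⟩; exact h2 ⟨hxz, by omega⟩), add_zero]
    · rw [hDD, if_neg h3, mul_zero,
        if_neg (by rintro ⟨-, hzy⟩; exact h3 hzy),
        if_neg (by rintro ⟨⟨-, hzy⟩, -⟩; exact h3 hzy), add_zero]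
  have hLHS : A.mulVecLin (DD y) x =
      ((Finset.univ.filter (fun z : Submodule F V => (z ≤ x ∧ finrank F z + 1 = k) ∧ z ≤ y)).card : ℝ)
      + ((Finset.univ.filter (fun z : Submodule F V => (x ≤ z ∧ z ≤ y) ∧ finrank F z = k + 1)).card : ℝ)
        * (q : ℝ) ^ k := by
    rw [Matrix.mulVecLin_apply]
    show (Finset.univ.sum fun z => A x z * DD y z) = _
    rw [Finset.sum_congr rfl (fun z _ => hsplit z), Finset.sum_add_distrib,
      ← Finset.sum_filter, ← Finset.sum_filter, Finset.sum_const, Finset.sum_const]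
    simp [mul_comm]
  -- RHS
  have hRHS : ((((q : ℝ) ^ m - (q : ℝ) ^ (n - m)) / ((q : ℝ) - 1)) • DD y
      + ∑ w ∈ Finset.univ.filter
          (fun w : Submodule F V => y ≤ w ∧ finrank F w = m + 1), DD w) x =
      (((q : ℝ) ^ m - (q : ℝ) ^ (n - m)) / ((q : ℝ) - 1)) * (if x ≤ y then (1:ℝ) else 0)
      + ((Finset.univ.filter
          (fun w : Submodule F V => (y ≤ w ∧ finrank F w = m + 1) ∧ x ≤ w)).card : ℝ) := by
    simp only [Pi.add_apply, Pi.smul_apply, Finset.sum_apply, smul_eq_mul, DD]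
    congr 1
    rw [Finset.sum_filter]
    have hpt : ∀ a : Submodule F V,
        (if y ≤ a ∧ finrank F a = m + 1 then (if x ≤ a then (1:ℝ) else 0) else 0)
        = if (y ≤ a ∧ finrank F a = m + 1) ∧ x ≤ a then (1:ℝ) else 0 := by
      intro a
      by_cases hp : y ≤ a ∧ finrank F a = m + 1 <;> by_cases hx : x ≤ a <;>
        simp [hp, hx]
    rw [Finset.sum_congr rfl (fun a _ => hpt a),
      ← Finset.sum_filter (fun w : Submodule F V => (y ≤ w ∧ finrank F w = m + 1) ∧ x ≤ w)
        (fun _ => (1:ℝ)), Finset.sum_const, nsmul_eq_mul, mul_one]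
  rw [hLHS, hRHS]
  obtain ⟨s, hs⟩ : ∃ s : ℕ, q = s + 1 := ⟨q - 1, by omega⟩
  have hq1s : q - 1 = s := by omega
  have hsr : (s : ℝ) = (q : ℝ) - 1 := by
    have : (q : ℝ) = (s : ℝ) + 1 := by exact_mod_cast hs
    linarith
  have hqne : (q : ℝ) ≠ 0 := by
    have : (0:ℝ) < (q:ℝ) := by exact_mod_cast (by omega : 0 < q)
    linarith
  have hqm_ne : (q : ℝ) ^ m ≠ 0 := pow_ne_zero _ hqne
  by_cases hxy : x ≤ y
  · have hkm : k ≤ m := Submodule.finrank_mono hxy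
    have hfilter1 : (Finset.univ.filter
        (fun z : Submodule F V => (z ≤ x ∧ finrank F z + 1 = k) ∧ z ≤ y))
        = Finset.univ.filter (fun z : Submodule F V => z ≤ x ∧ finrank F z + 1 = k) := by
      apply Finset.filter_congr
      intro z _
      exact ⟨fun h => h.1, fun h => ⟨h, h.1.trans hxy⟩⟩
    have h1 := hyperplane_count_le (W := V) hq x
    rw [← hk, hq1s] at h1
    have h2 := cover_count (W := V) hq x y hxy
    rw [← hk, hq1s] at h2
    have h3 := cover_count (W := V) hq y ⊤ le_top
    rw [← hm, finrank_top, ← hn, hq1s] at h3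
    have e2 : Nat.card {z : Submodule F V // (x ≤ z ∧ z ≤ y) ∧ finrank F z = k + 1}
        = Nat.card {z : Submodule F V // x ≤ z ∧ z ≤ y ∧ finrank F z = k + 1} :=
      Nat.card_congr (Equiv.subtypeEquivRight (fun z => by tauto))
    have e3 : Nat.card {w : Submodule F V // (y ≤ w ∧ finrank F w = m + 1) ∧ x ≤ w}
        = Nat.card {z : Submodule F V // y ≤ z ∧ z ≤ ⊤ ∧ finrank F z = m + 1} := by
      refine Nat.card_congr (Equiv.subtypeEquivRight (fun z => ?_))
      constructor
      · rintro ⟨⟨ha, hb⟩, -⟩; exact ⟨ha, le_top, hb⟩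
      · rintro ⟨ha, -, hb⟩; exact ⟨⟨ha, hb⟩, hxy.trans ha⟩
    rw [hfilter1, filter_card_eq_natCard, filter_card_eq_natCard, filter_card_eq_natCard, e2, e3, if_pos hxy]
    set c1n := Nat.card {z : Submodule F V // z ≤ x ∧ finrank F z + 1 = k} with hc1
    set c2n := Nat.card {z : Submodule F V // x ≤ z ∧ z ≤ y ∧ finrank F z = k + 1} with hc2
    set c3n := Nat.card {z : Submodule F V // y ≤ z ∧ z ≤ ⊤ ∧ finrank F z = m + 1} with hc3
    have e1' : (c1n : ℝ) * ((q:ℝ) - 1) + 1 = (q : ℝ) ^ k := by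
      rw [← hsr]; exact_mod_cast h1
    have e2' : (c2n : ℝ) * ((q:ℝ) ^ k * ((q:ℝ) - 1)) + (q:ℝ) ^ k = (q : ℝ) ^ m := by
      rw [← hsr]; exact_mod_cast h2
    have e3' : (c3n : ℝ) * ((q:ℝ) ^ m * ((q:ℝ) - 1)) + (q:ℝ) ^ m = (q : ℝ) ^ n := by
      rw [← hsr]; exact_mod_cast h3
    have hpowmn : (q:ℝ) ^ m * (q:ℝ) ^ (n - m) = (q:ℝ) ^ n := by
      rw [← pow_add]; congr 1; omega
    have key2 : ((c1n:ℝ) + (c2n:ℝ) * (q:ℝ)^k - (c3n:ℝ)) * (((q:ℝ) - 1) * (q:ℝ)^m)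
        = ((q:ℝ)^m - (q:ℝ)^(n-m)) * (q:ℝ)^m := by
      linear_combination (q:ℝ)^m * e1' + (q:ℝ)^m * e2' - e3' + hpowmn
    have key3 : (c1n:ℝ) + (c2n:ℝ) * (q:ℝ)^k - (c3n:ℝ)
        = ((q:ℝ)^m - (q:ℝ)^(n-m)) / ((q:ℝ) - 1) := by
      rw [eq_div_iff hq1ne]
      exact mul_right_cancel₀ hqm_ne (by linear_combination key2)
    linear_combination key3
  · have hfilter2 : (Finset.univ.filter
        (fun z : Submodule F V => (x ≤ z ∧ z ≤ y) ∧ finrank F z = k + 1)) = ∅ := by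
      rw [Finset.filter_eq_empty_iff]
      rintro z - ⟨⟨ha, hb⟩, -⟩
      exact hxy (ha.trans hb)
    have hsupinf := Submodule.finrank_sup_add_finrank_inf_eq x y
    rw [← hk, ← hm] at hsupinf
    have hinf_lt : finrank F ↥(x ⊓ y) < k := by
      have hne : x ⊓ y ≠ x := fun h => hxy (by rw [← h]; exact inf_le_right)
      have := Submodule.finrank_lt_finrank_of_lt (lt_of_le_of_ne inf_le_left hne)
      omega
    have hsup_gt : m < finrank F ↥(x ⊔ y) := by
      have hne : y ≠ x ⊔ y := fun h => hxy (le_sup_left.trans h.ge)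
      have := Submodule.finrank_lt_finrank_of_lt (lt_of_le_of_ne le_sup_right hne)
      omega
    by_cases hd : finrank F ↥(x ⊓ y) + 1 = k
    · have hf1 : (Finset.univ.filter
          (fun z : Submodule F V => (z ≤ x ∧ finrank F z + 1 = k) ∧ z ≤ y)) = {x ⊓ y} := by
        ext z
        simp only [Finset.mem_filter, Finset.mem_univ, true_and, Finset.mem_singleton]
        constructor
        · rintro ⟨⟨hzx, hzk⟩, hzy⟩
          exact Submodule.eq_of_le_of_finrank_le (le_inf hzx hzy) (by omega)
        · rintro rfl
          exact ⟨⟨inf_le_left, by omega⟩, inf_le_right⟩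
      have hf3 : (Finset.univ.filter
          (fun w : Submodule F V => (y ≤ w ∧ finrank F w = m + 1) ∧ x ≤ w)) = {x ⊔ y} := by
        ext w
        simp only [Finset.mem_filter, Finset.mem_univ, true_and, Finset.mem_singleton]
        constructor
        · rintro ⟨⟨hyw, hwm⟩, hxw⟩
          have hsw : x ⊔ y ≤ w := sup_le hxw hyw
          have := Submodule.finrank_mono hsw
          exact (Submodule.eq_of_le_of_finrank_le hsw (by omega)).symm
        · rintro rfl
          exact ⟨⟨le_sup_right, by omega⟩, le_sup_left⟩
      rw [hfilter2, hf1, hf3, Finset.card_singleton, Finset.card_singleton,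
        Finset.card_empty, if_neg hxy]
      push_cast
      ring
    · have hf1 : (Finset.univ.filter
          (fun z : Submodule F V => (z ≤ x ∧ finrank F z + 1 = k) ∧ z ≤ y)) = ∅ := by
        rw [Finset.filter_eq_empty_iff]
        rintro z - ⟨⟨hzx, hzk⟩, hzy⟩
        have := Submodule.finrank_mono (le_inf hzx hzy)
        omega
      have hf3 : (Finset.univ.filter
          (fun w : Submodule F V => (y ≤ w ∧ finrank F w = m + 1) ∧ x ≤ w)) = ∅ := by
        rw [Finset.filter_eq_empty_iff]
        rintro w - ⟨⟨hyw, hwm⟩, hxw⟩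
        have := Submodule.finrank_mono (sup_le hxw hyw)
        omega
      rw [hfilter2, hf1, hf3, Finset.card_empty, if_neg hxy]
      push_cast
      ring

noncomputable def theta (n q j : ℕ) : ℝ := ((q:ℝ)^(n-j) - (q:ℝ)^j)/((q:ℝ)-1)

lemma theta_strictAnti {q n : ℕ} (hq2 : 2 ≤ q) {j j' : ℕ} (h : j < j') (hj' : j' ≤ n) :
    theta n q j' < theta n q j := by
  have h1 : (1:ℝ) < (q:ℝ) := by exact_mod_cast hq2
  unfold theta
  rw [div_lt_div_iff_of_pos_right (by linarith)]
  have h2 : (q:ℝ) ^ j < (q:ℝ) ^ j' := pow_lt_pow_right₀ h1 h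
  have h3 : (q:ℝ) ^ (n - j') ≤ (q:ℝ) ^ (n - j) :=
    pow_le_pow_right₀ (by linarith) (by omega)
  linarith

lemma theta_inj {q n : ℕ} (hq2 : 2 ≤ q) {j j' : ℕ} (hj : j ≤ n) (hj' : j' ≤ n)
    (hne : j ≠ j') : theta n q j ≠ theta n q j' := by
  rcases lt_or_gt_of_ne hne with h | h
  · exact ne_of_gt (theta_strictAnti hq2 h hj')
  · exact ne_of_lt (theta_strictAnti hq2 h hj)

lemma DD_mem_iSup {q : ℕ} (hq : Fintype.card F = q)
    (A : Matrix (Submodule F V) (Submodule F V) ℝ)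
    (hA : ∀ y z : Submodule F V, A y z =
      if z ≤ y ∧ finrank F y = finrank F z + 1 then 1
      else if y ≤ z ∧ finrank F z = finrank F y + 1 then (q : ℝ) ^ finrank F y
      else 0)
    (i : ℕ) (y : Submodule F V) (hy : i ≤ finrank F y) :
    DD y ∈ ⨆ j ∈ Finset.range (finrank F V + 1 - i),
      Module.End.eigenspace A.mulVecLin (theta (finrank F V) q j) := by
  have hq2 : 2 ≤ q := hq ▸ Fintype.one_lt_card
  revert y hy
  suffices H : ∀ (c : ℕ) (i : ℕ), finrank F V + 1 - i ≤ c → ∀ y : Submodule F V,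
      i ≤ finrank F y →
      DD y ∈ ⨆ j ∈ Finset.range (finrank F V + 1 - i),
        Module.End.eigenspace A.mulVecLin (theta (finrank F V) q j) by
    exact H _ i le_rfl
  intro c
  induction c with
  | zero =>
    intro i hi y hy
    have h1 := Submodule.finrank_le y
    exact absurd hy (by omega)
  | succ c ih =>
    intro i hi y hy
    have hyN := Submodule.finrank_le y
    by_cases him : i + 1 ≤ finrank F y
    · have hmem := ih (i + 1) (by omega) y him
      have hsub : (⨆ j ∈ Finset.range (finrank F V + 1 - (i + 1)),
          Module.End.eigenspace A.mulVecLin (theta (finrank F V) q j))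
          ≤ ⨆ j ∈ Finset.range (finrank F V + 1 - i),
            Module.End.eigenspace A.mulVecLin (theta (finrank F V) q j) := by
        apply biSup_mono
        intro j hj
        rw [Finset.mem_range] at *
        omega
      exact hsub hmem
    · have hm : finrank F y = i := by omega
      have hiN : i ≤ finrank F V := hm ▸ hyN
      set n := finrank F V with hn
      clear_value n
      set f := A.mulVecLin with hf
      set E : ℕ → Submodule ℝ (Submodule F V → ℝ) :=
        fun j => Module.End.eigenspace f (theta n q j) with hE
      set T1 : Submodule ℝ (Submodule F V → ℝ) := ⨆ j ∈ Finset.range (n - i), E j with hT1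
      have hrange : n + 1 - (i + 1) = n - i := by omega
      have covmem : ∀ w ∈ Finset.univ.filter
          (fun w : Submodule F V => y ≤ w ∧ finrank F w = finrank F y + 1),
          DD w ∈ T1 := by
        intro w hw
        rw [Finset.mem_filter] at hw
        have := ih (i + 1) (by omega) w (by omega)
        rwa [hrange] at this
      have hv : (∑ w ∈ Finset.univ.filter
          (fun w : Submodule F V => y ≤ w ∧ finrank F w = finrank F y + 1), DD w) ∈ T1 :=
        Submodule.sum_mem _ covmem
      have hkey := A_DD hq A hA y
      have hco : ((q:ℝ) ^ finrank F y - (q:ℝ) ^ (finrank F V - finrank F y)) / ((q:ℝ) - 1)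
          = theta n q (n - i) := by
        unfold theta
        rw [hm, show n - (n - i) = i from by omega,
          show finrank F V - i = n - i from by omega]
      set θc := theta n q (n - i) with hθc
      have hLDD : f (DD y) - θc • DD y = ∑ w ∈ Finset.univ.filter
          (fun w : Submodule F V => y ≤ w ∧ finrank F w = finrank F y + 1), DD w := by
        rw [hkey, hco]
        abel
      have hsurj : ∀ v ∈ T1, ∃ u ∈ T1, f u - θc • u = v := by
        have hmap : T1 ≤ Submodule.map (f - θc • (LinearMap.id : (Submodule F V → ℝ) →ₗ[ℝ] (Submodule F V → ℝ))) T1 := by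
          refine iSup₂_le fun j hj => ?_
          rw [Finset.mem_range] at hj
          intro u hu
          have hjne : theta n q j - θc ≠ 0 := by
            refine sub_ne_zero.mpr (theta_inj hq2 (by omega) (by omega) (by omega))
          have hfu : f u = theta n q j • u := Module.End.mem_eigenspace_iff.mp hu
          refine Submodule.mem_map.mpr ⟨(theta n q j - θc)⁻¹ • u, ?_, ?_⟩
          · have : ((theta n q j - θc)⁻¹ • u) ∈ E j := Submodule.smul_mem _ _ hu
            exact le_iSup₂ (f := fun j _ => E j) j (Finset.mem_range.mpr hj) this
          · simp only [LinearMap.sub_apply, LinearMap.smul_apply, LinearMap.id_apply,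
              map_smul, hfu]
            match_scalars
            field_simp
        intro v hv
        obtain ⟨u, huT, huL⟩ := hmap hv
        exact ⟨u, huT, by simpa using huL⟩
      obtain ⟨u, huT, huL⟩ := hsurj _ hv
      have hker : f (DD y - u) = θc • (DD y - u) := by
        have h1 : f (DD y) - θc • DD y = f u - θc • u := by rw [hLDD, huL]
        have h2 : f (DD y - u) = f (DD y) - f u := map_sub _ _ _
        rw [h2, smul_sub]
        exact sub_eq_sub_iff_sub_eq_sub.mp h1
      have hmem1 : DD y - u ∈ E (n - i) := Module.End.mem_eigenspace_iff.mpr hker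
      have hfinal : DD y = (DD y - u) + u := by abel
      rw [hfinal]
      apply Submodule.add_mem
      · exact le_iSup₂ (f := fun j (_ : j ∈ Finset.range (n + 1 - i)) => E j) (n - i)
          (Finset.mem_range.mpr (by omega)) hmem1
      · have hsub : T1 ≤ ⨆ j ∈ Finset.range (n + 1 - i), E j := by
          apply biSup_mono
          intro j hj
          rw [Finset.mem_range] at *
          omega
        exact hsub huT

lemma eigenspace_finrank_le {q : ℕ} (hq : Fintype.card F = q)
    (A : Matrix (Submodule F V) (Submodule F V) ℝ)
    (hA : ∀ y z : Submodule F V, A y z =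
      if z ≤ y ∧ finrank F y = finrank F z + 1 then 1
      else if y ≤ z ∧ finrank F z = finrank F y + 1 then (q : ℝ) ^ finrank F y
      else 0)
    (j : ℕ) (hjN : j ≤ finrank F V) :
    finrank ℝ (Module.End.eigenspace A.mulVecLin (theta (finrank F V) q j))
      ≤ Fintype.card {z : Submodule F V // finrank F z = finrank F V - j} := by
  have hq2 : 2 ≤ q := hq ▸ Fintype.one_lt_card
  set n := finrank F V with hn
  set E : Submodule ℝ (Submodule F V → ℝ) :=
    Module.End.eigenspace A.mulVecLin (theta n q j) with hE
  set P : Submodule F V → Prop := fun z => ¬ (finrank F z = n - j) with hP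
  set g : {z : Submodule F V // P z} → (Submodule F V → ℝ) := fun z => DD z.1 with hg
  have hgind : LinearIndependent ℝ g :=
    DD_linearIndependent.comp Subtype.val Subtype.val_injective
  set Y : Submodule ℝ (Submodule F V → ℝ) := Submodule.span ℝ (Set.range g) with hY
  set θj := theta n q j with hθj
  set μ : Submodule F V → ℝ := fun u => theta n q (n - finrank F u) with hμdef
  have hμ : ∀ u : Submodule F V,
      (((q:ℝ) ^ finrank F u - (q:ℝ) ^ (finrank F V - finrank F u)) / ((q:ℝ) - 1)) = μ u := by
    intro u
    have hu : finrank F u ≤ n := hn ▸ Submodule.finrank_le u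
    rw [hμdef]
    dsimp only
    unfold theta
    rw [show n - (n - finrank F u) = finrank F u from by omega, ← hn]
  have hdisj : E ⊓ Y = ⊥ := by
    rw [Submodule.eq_bot_iff]
    rintro v ⟨hvE, hvY⟩
    obtain ⟨cf, hcf⟩ := (Submodule.mem_span_range_iff_exists_fun ℝ).mp hvY
    set c : Submodule F V → ℝ := fun u => if h : P u then cf ⟨u, h⟩ else 0 with hc
    have hczero : ∀ u : Submodule F V, ¬ P u → c u = 0 := by
      intro u hu; rw [hc]; exact dif_neg hu
    have hv' : ∑ u : Submodule F V, c u • DD u = v := by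
      rw [← hcf]
      have h1 : ∑ u : Submodule F V, c u • DD u
          = ∑ u ∈ Finset.univ.filter P, c u • DD u := by
        symm
        apply Finset.sum_subset (Finset.filter_subset P Finset.univ)
        intro u _ hu
        have hnp : ¬ P u := fun h => hu (Finset.mem_filter.mpr ⟨Finset.mem_univ u, h⟩)
        rw [hczero u hnp, zero_smul]
      rw [h1, Finset.sum_subtype (p := P) (Finset.univ.filter P) (fun u => by simp) (fun u => c u • DD u)]
      apply Finset.sum_congr rfl
      intro z _
      rw [hc]
      simp only [dif_pos z.2]
      rfl
    have hEig : A.mulVecLin v = θj • v := Module.End.mem_eigenspace_iff.mp hvE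
    have hAv : A.mulVecLin v = ∑ u : Submodule F V, c u •
        (μ u • DD u
         + ∑ w ∈ Finset.univ.filter
            (fun w : Submodule F V => u ≤ w ∧ finrank F w = finrank F u + 1), DD w) := by
      rw [← hv', map_sum]
      exact Finset.sum_congr rfl (fun u _ => by rw [map_smul, A_DD hq A hA u, hμ u])
    have e2 : ∑ u : Submodule F V, c u • (∑ w ∈ Finset.univ.filter
          (fun w : Submodule F V => u ≤ w ∧ finrank F w = finrank F u + 1), DD w)
        = ∑ u : Submodule F V, (∑ z : Submodule F V,
            (if z ≤ u ∧ finrank F u = finrank F z + 1 then c z else 0)) • DD u := by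
      calc ∑ u : Submodule F V, c u • (∑ w ∈ Finset.univ.filter
            (fun w : Submodule F V => u ≤ w ∧ finrank F w = finrank F u + 1), DD w)
          = ∑ u : Submodule F V, ∑ w : Submodule F V,
              (if u ≤ w ∧ finrank F w = finrank F u + 1 then c u • DD w else 0) := by
            refine Finset.sum_congr rfl (fun u _ => ?_)
            rw [Finset.smul_sum, ← Finset.sum_filter]
        _ = ∑ w : Submodule F V, ∑ u : Submodule F V,
              (if u ≤ w ∧ finrank F w = finrank F u + 1 then c u • DD w else 0) :=
            Finset.sum_comm
        _ = ∑ w : Submodule F V, (∑ u : Submodule F V,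
              (if u ≤ w ∧ finrank F w = finrank F u + 1 then c u else 0)) • DD w := by
            refine Finset.sum_congr rfl (fun w _ => ?_)
            rw [Finset.sum_smul]
            refine Finset.sum_congr rfl (fun u _ => ?_)
            split_ifs <;> simp
    have hcomb : ∑ u : Submodule F V,
        ((μ u - θj) * c u + ∑ z : Submodule F V,
          (if z ≤ u ∧ finrank F u = finrank F z + 1 then c z else 0)) • DD u = 0 := by
      have hsplit2 : ∀ u : Submodule F V,
          ((μ u - θj) * c u + ∑ z : Submodule F V,
            (if z ≤ u ∧ finrank F u = finrank F z + 1 then c z else 0)) • DD u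
          = (c u • (μ u • DD u) + (∑ z : Submodule F V,
              (if z ≤ u ∧ finrank F u = finrank F z + 1 then c z else 0)) • DD u)
            - θj • (c u • DD u) := by
        intro u
        match_scalars
        ring
      rw [Finset.sum_congr rfl (fun u _ => hsplit2 u), Finset.sum_sub_distrib,
        Finset.sum_add_distrib, ← e2, ← Finset.sum_add_distrib,
        Finset.sum_congr rfl (fun u _ => (smul_add (c u) _ _).symm), ← hAv,
        ← Finset.smul_sum, hv', hEig, sub_self]
    have hind := Fintype.linearIndependent_iff.mp DD_linearIndependent _ hcomb
    have hc0 : ∀ (d : ℕ) (u : Submodule F V), finrank F u = d → c u = 0 := by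
      intro d
      induction d using Nat.strong_induction_on with
      | _ d ihd =>
        intro u hu
        by_cases hPu : P u
        · have h0 := hind u
          have hsum0 : ∑ z : Submodule F V,
              (if z ≤ u ∧ finrank F u = finrank F z + 1 then c z else 0) = 0 :=
            Finset.sum_eq_zero (fun z _ => by
              split_ifs with hcond
              · exact ihd (finrank F z) (by omega) z rfl
              · rfl)
          rw [hsum0, add_zero] at h0
          have hun : finrank F u ≤ n := hn ▸ Submodule.finrank_le u
          have hne : μ u - θj ≠ 0 := by
            refine sub_ne_zero.mpr (theta_inj hq2 (by omega) (by omega) ?_)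
            simp only [hP] at hPu
            omega
          exact (mul_eq_zero.mp h0).resolve_left hne
        · exact hczero u hPu
    rw [← hv']
    exact Finset.sum_eq_zero (fun u _ => by rw [hc0 (finrank F u) u rfl, zero_smul])
  have hsum := Submodule.finrank_sup_add_finrank_inf_eq E Y
  rw [hdisj, finrank_bot, add_zero] at hsum
  have hYr : finrank ℝ Y = Fintype.card {z : Submodule F V // P z} :=
    finrank_span_eq_card hgind
  have htop : finrank ℝ ↥(E ⊔ Y) ≤ Fintype.card (Submodule F V) := by
    have h := Submodule.finrank_le (E ⊔ Y)
    rwa [Module.finrank_pi] at h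
  have hcompl : Fintype.card {z : Submodule F V // P z}
      = Fintype.card (Submodule F V)
        - Fintype.card {z : Submodule F V // finrank F z = n - j} := by
    rw [Fintype.card_congr (Equiv.subtypeEquivRight
      (p := P) (q := fun z : Submodule F V => ¬ finrank F z = n - j)
      (fun z => by simp only [hP]))]
    exact Fintype.card_subtype_compl _
  have hle2 := Fintype.card_subtype_le (fun z : Submodule F V => finrank F z = n - j)
  omega

lemma finrank_biSup_le {M : Type*} [AddCommGroup M] [Module ℝ M] [FiniteDimensional ℝ M]
    (s : Finset ℕ) (f : ℕ → Submodule ℝ M) :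
    finrank ℝ ↥(⨆ j ∈ s, f j) ≤ ∑ j ∈ s, finrank ℝ ↥(f j) := by
  classical
  induction s using Finset.induction with
  | empty => simp
  | insert _ _ hnotmem ih =>
    rename_i a s
    rw [Finset.iSup_insert, Finset.sum_insert hnotmem]
    have h1 := Submodule.finrank_sup_add_finrank_inf_eq (f a) (⨆ j ∈ s, f j)
    have h2 : finrank ℝ ↥(f a ⊔ ⨆ j ∈ s, f j)
        ≤ finrank ℝ ↥(f a) + finrank ℝ ↥(⨆ j ∈ s, f j) := by omega
    exact h2.trans (by omega)

lemma card_partition (i : ℕ) (hiN : i ≤ finrank F V) :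
    ∑ j ∈ Finset.range (finrank F V + 1 - i),
      Fintype.card {z : Submodule F V // finrank F z = finrank F V - j}
      = Fintype.card {y : Submodule F V // i ≤ finrank F y} := by
  classical
  rw [Fintype.card_subtype]
  rw [Finset.card_eq_sum_card_fiberwise
    (f := fun y : Submodule F V => finrank F V - finrank F y)
    (t := Finset.range (finrank F V + 1 - i))
    (fun y hy => by
      rw [Finset.mem_coe, Finset.mem_filter] at hy
      have := Submodule.finrank_le y
      rw [Finset.mem_coe, Finset.mem_range]
      show finrank F V - finrank F y < finrank F V + 1 - i
      omega)]
  refine Finset.sum_congr rfl (fun j hj => ?_)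
  rw [Finset.mem_range] at hj
  rw [Fintype.card_subtype, Finset.filter_filter]
  congr 1
  apply Finset.filter_congr
  intro z _
  have := Submodule.finrank_le z
  constructor
  · intro h; omega
  · rintro ⟨h1, h2⟩; omega

end Main

theorem stmt_15 (q N i : ℕ) (F : Type*) [Field F] [Fintype F] (hF : Fintype.card F = q)
    (V : Type*) [AddCommGroup V] [Module F V] [FiniteDimensional F V]
    (hV : finrank F V = N) (hiN : i ≤ N) [Fintype (Submodule F V)]
    (A : Matrix (Submodule F V) (Submodule F V) ℝ)
    (hA : ∀ y z : Submodule F V, A y z =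
      if z ≤ y ∧ finrank F y = finrank F z + 1 then 1
      else if y ≤ z ∧ finrank F z = finrank F y + 1 then (q : ℝ) ^ finrank F y
      else 0)
    (dd : Submodule F V → (Submodule F V → ℝ))
    (hdd : ∀ y z : Submodule F V, dd y z = if z ≤ y then 1 else 0) :
    LinearIndependent ℝ (fun y : {y : Submodule F V // i ≤ finrank F y} => dd y) ∧
    Submodule.span ℝ (Set.range (fun y : {y : Submodule F V // i ≤ finrank F y} => dd (y : Submodule F V))) =
      ⨆ j ∈ Finset.range (N - i + 1),
        Module.End.eigenspace A.mulVecLin (((q : ℝ) ^ (N - j) - (q : ℝ) ^ j) / ((q : ℝ) - 1)) := by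
  subst hF hV
  have hddDD : dd = DD := funext fun y => funext fun z => by rw [hdd]; rfl
  subst hddDD
  constructor
  · exact DD_linearIndependent.comp Subtype.val Subtype.val_injective
  · have hrange : Finset.range (finrank F V - i + 1)
        = Finset.range (finrank F V + 1 - i) := by congr 1; omega
    rw [hrange]
    have hle : Submodule.span ℝ (Set.range
        (fun y : {y : Submodule F V // i ≤ finrank F y} => DD (y : Submodule F V)))
        ≤ ⨆ j ∈ Finset.range (finrank F V + 1 - i),
          Module.End.eigenspace A.mulVecLin
            (((Fintype.card F : ℝ) ^ (finrank F V - j) - (Fintype.card F : ℝ) ^ j)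
              / ((Fintype.card F : ℝ) - 1)) := by
      rw [Submodule.span_le]
      rintro _ ⟨y, rfl⟩
      exact DD_mem_iSup rfl A hA i y.1 y.2
    refine Submodule.eq_of_le_of_finrank_le hle ?_
    have h1 : finrank ℝ ↥(Submodule.span ℝ (Set.range
        (fun y : {y : Submodule F V // i ≤ finrank F y} => DD (y : Submodule F V))))
        = Fintype.card {y : Submodule F V // i ≤ finrank F y} :=
      finrank_span_eq_card (DD_linearIndependent.comp Subtype.val Subtype.val_injective)
    rw [h1]
    have h2 := finrank_biSup_le (Finset.range (finrank F V + 1 - i))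
      (fun j => Module.End.eigenspace A.mulVecLin
        (((Fintype.card F : ℝ) ^ (finrank F V - j) - (Fintype.card F : ℝ) ^ j)
          / ((Fintype.card F : ℝ) - 1)))
    refine h2.trans ?_
    rw [← card_partition i hiN]
    refine Finset.sum_le_sum (fun j hj => ?_)
    rw [Finset.mem_range] at hj
    exact eigenspace_finrank_le rfl A hA j (by omega)
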